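/- Let (X,T) be a compact Hausdorff dynamical system with a transitive point x*, and let p ∈ E(X,T). The following are equivalent: (i) p is continuous on X; (ii) p∘q = q∘p on X for every q ∈ E(X,T); (iii) p(q(x*)) = q(p(x*)) for every q ∈ E(X,T). -/

import Mathlib

open Filter Topology

/-- The `n`-th iterate (for `n : ℤ`) of a homeomorphism `T`. -/
def hIter {X : Type*} [TopologicalSpace X] (T : X ≃ₜ X) (n : ℤ) : X → X :=
  fun x => (T.toEquiv ^ n) x

/-- The enveloping semigroup of `(X,T)`: the closure of `{Tⁿ : n ∈ ℤ}` in `X → X` with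
the product (pointwise convergence) topology. -/
def envSG {X : Type*} [TopologicalSpace X] (T : X ≃ₜ X) : Set (X → X) :=
  closure (Set.range (hIter T))

lemma hIter_comm {X : Type*} [TopologicalSpace X] (T : X ≃ₜ X) (m n : ℤ) (x : X) :
    hIter T m (hIter T n x) = hIter T n (hIter T m x) := by
  simp only [hIter, ← Equiv.Perm.mul_apply, ← zpow_add, add_comm]

lemma hIter_cont {X : Type*} [TopologicalSpace X] (T : X ≃ₜ X) (n : ℤ) :
    Continuous (hIter T n) := by
  induction n using Int.induction_on with
  | zero => exact (show hIter T 0 = id from funext fun x => by simp [hIter]) ▸ continuous_id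
  | succ k ih =>
      have h : hIter T (k + 1) = T ∘ hIter T k := funext fun x => by
        show (T.toEquiv ^ ((k : ℤ) + 1)) x = T.toEquiv ((T.toEquiv ^ (k : ℤ)) x)
        rw [← Equiv.Perm.mul_apply, ← zpow_one_add, add_comm]
      rw [h]; exact T.continuous.comp ih
  | pred k ih =>
      have h : hIter T (-(k : ℤ) - 1) = T.symm ∘ hIter T (-k) := funext fun x => by
        show (T.toEquiv ^ (-(k : ℤ) - 1)) x = (T.toEquiv)⁻¹ ((T.toEquiv ^ (-(k : ℤ))) x)
        rw [← Equiv.Perm.mul_apply, ← zpow_neg_one, ← zpow_add]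
        ring_nf
      rw [h]; exact T.symm.continuous.comp ih

lemma hIter_mem {X : Type*} [TopologicalSpace X] (T : X ≃ₜ X) (n : ℤ) :
    hIter T n ∈ envSG T := subset_closure ⟨n, rfl⟩

/-- For a compact Hausdorff system `(X,T)` with a transitive point `x*` and `p` in the
enveloping semigroup, the following are equivalent: (i) `p` is continuous; (ii) `p` commutes
with every `q` in the enveloping semigroup; (iii) `p (q x*) = q (p x*)` for every `q` in the
enveloping semigroup. -/
theorem stmt0 {X : Type*} [TopologicalSpace X] [CompactSpace X] [T2Space X] [Nonempty X]
    (T : X ≃ₜ X) (xs : X) (hxs : Dense (Set.range fun n : ℤ => hIter T n xs))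
    (p : X → X) (hp : p ∈ envSG T) :
    List.TFAE [Continuous p,
      ∀ q ∈ envSG T, ∀ x : X, p (q x) = q (p x),
      ∀ q ∈ envSG T, p (q xs) = q (p xs)] := by
  -- `p` commutes with each iterate of `T` (uses only `hp`)
  have hcommT : ∀ (n : ℤ) (x : X), p (hIter T n x) = hIter T n (p x) := by
    intro n x
    have hcl : IsClosed {f : X → X | f (hIter T n x) = hIter T n (f x)} :=
      isClosed_eq (continuous_apply _) ((hIter_cont T n).comp (continuous_apply x))
    have : envSG T ⊆ {f : X → X | f (hIter T n x) = hIter T n (f x)} :=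
      closure_minimal (by rintro f ⟨m, rfl⟩; exact hIter_comm T m n x) hcl
    exact this hp
  tfae_have 1 → 2 := by
    intro hc q hq x
    have hcl : IsClosed {f : X → X | p (f x) = f (p x)} :=
      isClosed_eq (hc.comp (continuous_apply x)) (continuous_apply (p x))
    exact closure_minimal (by rintro f ⟨m, rfl⟩; exact hcommT m x) hcl hq
  tfae_have 2 → 3 := fun h q hq => h q hq xs
  tfae_have 3 → 1 := by
    intro h3
    haveI : CompactSpace (envSG T) :=
      isCompact_iff_compactSpace.mp (isClosed_closure.isCompact)
    set φ : envSG T → X := fun q => (q : X → X) xs with hφdef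
    have hφc : Continuous φ := (continuous_apply xs).comp continuous_subtype_val
    have hφsurj : Function.Surjective φ := by
      intro x
      have himg : IsClosed (Set.range φ) := (isCompact_range hφc).isClosed
      have hsub : Set.range (fun n : ℤ => hIter T n xs) ⊆ Set.range φ := by
        rintro _ ⟨n, rfl⟩
        exact ⟨⟨hIter T n, hIter_mem T n⟩, rfl⟩
      have : (Set.univ : Set X) ⊆ Set.range φ := by
        rw [← hxs.closure_eq]
        simpa using closure_minimal hsub himg
      exact this (Set.mem_univ x)
    have hquot : Topology.IsQuotientMap φ := (hφc.isClosedMap).isQuotientMap hφc hφsurj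
    rw [hquot.continuous_iff]
    have : p ∘ φ = fun q : envSG T => (q : X → X) (p xs) := by
      funext q; exact h3 q q.2
    rw [this]
    exact (continuous_apply (p xs)).comp continuous_subtype_val
  tfae_finish
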